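/- (Theorem 1, part ii: uniform ultimate boundedness under disturbance.) Let 0 < μ ≤ Λ, 0 < r < 2μ/Λ², and ε̄ ≥ 0. Let H₂ : ℕ → ℝ^{q×q} be symmetric positive-definite matrices with λ_min(H₂(k)) ≥ μ and λ_max(H₂(k)) ≤ Λ for all k, let H₃ : ℕ → ℝ^{n×q} satisfy ‖H₃(k)‖_F ≤ ε̄ for all k, and let the parameter error obey Φ̃(k+1) = Φ̃(k)·(I_q − r·H₂(k)) + r·H₃(k). Then, with c := max(1 − rμ, rΛ − 1), one has 0 ≤ c < 1 and limsup_{k→∞} ‖Φ̃(k)‖_F ≤ r·ε̄/(1 − c); in particular, the parameter error, and hence the identification error e_si(k) = Φ̃(k)ζ̄(k) − ω̄(k) for bounded ζ̄, ω̄, is uniformly ultimately bounded, converging to a bounded region around zero. -/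

import Mathlib

open scoped Matrix

attribute [local instance] Matrix.frobeniusNormedAddCommGroup
attribute [local instance] Matrix.frobeniusNormSMulClass

open Matrix Finset


-- unitary preserves dot product over ℝ
lemma unitary_dot {q : ℕ} (U : Matrix (Fin q) (Fin q) ℝ)
    (hU : U ∈ Matrix.unitaryGroup (Fin q) ℝ) (x : Fin q → ℝ) :
    (U *ᵥ x) ⬝ᵥ (U *ᵥ x) = x ⬝ᵥ x := by
  have h1 : star U * U = 1 := hU.1
  calc (U *ᵥ x) ⬝ᵥ (U *ᵥ x) = ((U *ᵥ x) ᵥ* U) ⬝ᵥ x := dotProduct_mulVec _ _ _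
    _ = (x ᵥ* (Uᵀ * U)) ⬝ᵥ x := by rw [Matrix.vecMul_mulVec]
    _ = x ⬝ᵥ x := by
        have : Uᵀ = star U := by
          ext i j; simp [Matrix.star_apply]
        rw [this, h1]; simp

lemma spectral_quad {q : ℕ} (H : Matrix (Fin q) (Fin q) ℝ) (hH : H.IsHermitian)
    (r c : ℝ) (hc : ∀ i, |1 - r * hH.eigenvalues i| ≤ c) (v : Fin q → ℝ) :
    ((1 - r • H) *ᵥ v) ⬝ᵥ ((1 - r • H) *ᵥ v) ≤ c ^ 2 * (v ⬝ᵥ v) := by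
  set U : Matrix (Fin q) (Fin q) ℝ := (hH.eigenvectorUnitary : Matrix (Fin q) (Fin q) ℝ)
  have hUmem : U ∈ Matrix.unitaryGroup (Fin q) ℝ := hH.eigenvectorUnitary.2
  have hUs : star U ∈ Matrix.unitaryGroup (Fin q) ℝ := Unitary.star_mem hUmem
  have hUU : U * star U = 1 := hUmem.2
  set D : Matrix (Fin q) (Fin q) ℝ := Matrix.diagonal (fun i => 1 - r * hH.eigenvalues i)
  have hdecomp : (1 - r • H) = U * D * star U := by
    have hspec := hH.spectral_theorem
    have hco : (RCLike.ofReal ∘ hH.eigenvalues : Fin q → ℝ) = hH.eigenvalues := by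
      ext i; simp
    rw [hco, Unitary.conjStarAlgAut_apply] at hspec
    have hd : D = 1 - r • Matrix.diagonal hH.eigenvalues := by
      ext i j
      by_cases h : i = j <;> simp [D, Matrix.diagonal, h, Matrix.one_apply]
    rw [hd, Matrix.mul_sub, Matrix.sub_mul, mul_one, hUU, Matrix.mul_smul, Matrix.smul_mul,
      ← hspec]
  set w : Fin q → ℝ := star U *ᵥ v with hw
  have hAv : (1 - r • H) *ᵥ v = U *ᵥ (D *ᵥ w) := by
    rw [hdecomp, ← Matrix.mulVec_mulVec, ← Matrix.mulVec_mulVec]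
  rw [hAv, unitary_dot U hUmem]
  have hDw : ∀ j, (D *ᵥ w) j = (1 - r * hH.eigenvalues j) * w j := by
    intro j; simp [D, Matrix.mulVec_diagonal]
  have hsum : (D *ᵥ w) ⬝ᵥ (D *ᵥ w) = ∑ j, ((1 - r * hH.eigenvalues j) * w j) ^ 2 := by
    simp [dotProduct, hDw, sq]
  have hww : w ⬝ᵥ w = v ⬝ᵥ v := by rw [hw]; exact unitary_dot _ hUs v
  rw [hsum, ← hww]
  have : c ^ 2 * (w ⬝ᵥ w) = ∑ j, c ^ 2 * (w j) ^ 2 := by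
    simp [dotProduct, Finset.mul_sum, sq]
  rw [this]
  apply Finset.sum_le_sum
  intro j _
  rw [mul_pow]
  apply mul_le_mul_of_nonneg_right _ (sq_nonneg _)
  calc (1 - r * hH.eigenvalues j)^2 = |1 - r * hH.eigenvalues j|^2 := (sq_abs _).symm
    _ ≤ c ^ 2 := by
        apply pow_le_pow_left₀ (abs_nonneg _) (hc j) 2

lemma fro_norm_eq {n q : ℕ} (A : Matrix (Fin n) (Fin q) ℝ) :
    ‖A‖ = Real.sqrt (∑ i, ∑ j, (A i j) ^ 2) := by
  rw [Matrix.frobenius_norm_def, Real.sqrt_eq_rpow]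
  congr 1
  apply Finset.sum_congr rfl
  intro i _
  apply Finset.sum_congr rfl
  intro j _
  rw [Real.norm_eq_abs, show (2:ℝ) = ((2:ℕ):ℝ) by norm_num, Real.rpow_natCast, sq_abs]

lemma fro_contract {n q : ℕ} (M : Matrix (Fin n) (Fin q) ℝ) (A : Matrix (Fin q) (Fin q) ℝ)
    (hsymm : Aᵀ = A) (c : ℝ) (hc : 0 ≤ c)
    (hq : ∀ v : Fin q → ℝ, (A *ᵥ v) ⬝ᵥ (A *ᵥ v) ≤ c ^ 2 * (v ⬝ᵥ v)) :
    ‖M * A‖ ≤ c * ‖M‖ := by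
  rw [fro_norm_eq, fro_norm_eq, ← Real.sqrt_sq hc, ← Real.sqrt_mul (sq_nonneg c)]
  apply Real.sqrt_le_sqrt
  rw [Finset.mul_sum]
  apply Finset.sum_le_sum
  intro i _
  have hAsw : ∀ a b, A a b = A b a := by
    intro a b
    conv_lhs => rw [← hsymm]
    rfl
  have hrow : ∀ j, (M * A) i j = (A *ᵥ (M i)) j := by
    intro j
    rw [Matrix.mul_apply]
    simp only [Matrix.mulVec, dotProduct]
    exact Finset.sum_congr rfl fun x _ => by rw [hAsw j x, mul_comm]
  calc ∑ j, ((M * A) i j) ^ 2 = (A *ᵥ (M i)) ⬝ᵥ (A *ᵥ (M i)) := by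
        simp [dotProduct, hrow, sq]
    _ ≤ c ^ 2 * ((M i) ⬝ᵥ (M i)) := hq (M i)
    _ = c ^ 2 * ∑ j, (M i j) ^ 2 := by simp [dotProduct, sq]

lemma mulvec_sq_le {n q : ℕ} (M : Matrix (Fin n) (Fin q) ℝ) (v : Fin q → ℝ) :
    Real.sqrt (∑ i, ((M *ᵥ v) i) ^ 2) ≤ ‖M‖ * Real.sqrt (∑ j, (v j) ^ 2) := by
  rw [fro_norm_eq, ← Real.sqrt_mul (by positivity)]
  apply Real.sqrt_le_sqrt
  rw [Finset.sum_mul]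
  apply Finset.sum_le_sum
  intro i _
  calc ((M *ᵥ v) i) ^ 2 = (∑ j, M i j * v j) ^ 2 := by
        simp [Matrix.mulVec, dotProduct]
    _ ≤ (∑ j, (M i j) ^ 2) * ∑ j, (v j) ^ 2 :=
        Finset.sum_mul_sq_le_sq_mul_sq Finset.univ (M i) v

/-- Theorem 1, part ii (uniform ultimate boundedness under disturbance): if the parameter
error obeys `Φ̃(k+1) = Φ̃(k)·(I − r·H₂(k)) + r·H₃(k)` with symmetric positive-definite
`H₂(k)` whose eigenvalues lie in `[μ, Λ]`, `‖H₃(k)‖_F ≤ ε̄`, and `0 < r < 2μ/Λ²`, then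
with `c = max (1 - r*μ) (r*Λ - 1)` one has `0 ≤ c < 1` and
`limsup ‖Φ̃(k)‖_F ≤ r·ε̄/(1 - c)`; in particular the identification error
`e_si(k) = Φ̃(k)ζ̄(k) − ω̄(k)` is uniformly ultimately bounded for bounded `ζ̄, ω̄`. -/
theorem concurrent_learning_uub_under_disturbance
    {n q : ℕ} (μ Λ r εbar : ℝ) (hμ : 0 < μ) (hμΛ : μ ≤ Λ)
    (hr0 : 0 < r) (hr : r < 2 * μ / Λ ^ 2) (hεbar : 0 ≤ εbar)
    (H₂ : ℕ → Matrix (Fin q) (Fin q) ℝ)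
    (hherm : ∀ k, (H₂ k).IsHermitian) (hpos : ∀ k, (H₂ k).PosDef)
    (heig : ∀ k i, μ ≤ (hherm k).eigenvalues i ∧ (hherm k).eigenvalues i ≤ Λ)
    (H₃ : ℕ → Matrix (Fin n) (Fin q) ℝ) (hH₃ : ∀ k, ‖H₃ k‖ ≤ εbar)
    (Φtilde : ℕ → Matrix (Fin n) (Fin q) ℝ)
    (hdyn : ∀ k, Φtilde (k + 1) = Φtilde k * (1 - r • H₂ k) + r • H₃ k) :
    0 ≤ max (1 - r * μ) (r * Λ - 1) ∧
    max (1 - r * μ) (r * Λ - 1) < 1 ∧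
    Filter.limsup (fun k => ‖Φtilde k‖) Filter.atTop ≤
      r * εbar / (1 - max (1 - r * μ) (r * Λ - 1)) ∧
    ∀ (ζ : ℕ → EuclideanSpace ℝ (Fin q)) (ω : ℕ → EuclideanSpace ℝ (Fin n)) (ωb : ℝ),
      (∀ k, ‖ζ k‖ ≤ 1) → (∀ k, ‖ω k‖ ≤ ωb) →
      ∃ B : ℝ, ∀ᶠ k in Filter.atTop,
        ‖(show EuclideanSpace ℝ (Fin n) from WithLp.toLp 2 (Φtilde k *ᵥ ζ k)) - ω k‖ ≤ B := by
  have hΛ : 0 < Λ := lt_of_lt_of_le hμ hμΛ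
  have hrΛ2 : r * Λ ^ 2 < 2 * μ := (lt_div_iff₀ (by positivity)).1 hr
  have hrΛ : r * Λ < 2 := by nlinarith
  set c : ℝ := max (1 - r * μ) (r * Λ - 1) with hc
  have h0c : 0 ≤ c := by
    rcases le_total (r * μ) 1 with h | h
    · exact le_max_of_le_left (by linarith)
    · refine le_max_of_le_right ?_
      nlinarith [mul_le_mul_of_nonneg_left hμΛ hr0.le]
  have hc1 : c < 1 := by
    apply max_lt
    · nlinarith
    · linarith
  have h1c : 0 < 1 - c := by linarith
  set S : ℝ := r * εbar / (1 - c) with hS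
  have hS0 : 0 ≤ S := by positivity
  -- one-step contraction
  have key : ∀ k, ‖Φtilde (k + 1)‖ ≤ c * ‖Φtilde k‖ + r * εbar := by
    intro k
    rw [hdyn k]
    refine le_trans (norm_add_le _ _) (add_le_add ?_ ?_)
    · apply fro_contract _ _ ?_ c h0c ?_
      · have hsym : (H₂ k)ᵀ = H₂ k := by
          rw [← Matrix.conjTranspose_eq_transpose_of_trivial]
          exact hherm k
        rw [Matrix.transpose_sub, Matrix.transpose_one, Matrix.transpose_smul, hsym]
      · intro v
        apply spectral_quad (H₂ k) (hherm k) r c _ v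
        intro i
        rw [abs_le]
        constructor
        · have h1 := (heig k i).2
          have : r * (hherm k).eigenvalues i ≤ r * Λ :=
            mul_le_mul_of_nonneg_left h1 hr0.le
          have h2 : r * Λ - 1 ≤ c := le_max_right _ _
          linarith
        · have h1 := (heig k i).1
          have : r * μ ≤ r * (hherm k).eigenvalues i :=
            mul_le_mul_of_nonneg_left h1 hr0.le
          have h2 : 1 - r * μ ≤ c := le_max_left _ _
          linarith
    · rw [norm_smul, Real.norm_eq_abs, abs_of_pos hr0]
      exact mul_le_mul_of_nonneg_left (hH₃ k) hr0.le
  -- iterated bound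
  have bound : ∀ k, ‖Φtilde k‖ ≤ c ^ k * ‖Φtilde 0‖ + S := by
    intro k
    induction k with
    | zero => simp [hS0]
    | succ k ih =>
      have hfix : c * S + r * εbar = S := by
        rw [hS]; field_simp; ring
      calc ‖Φtilde (k + 1)‖ ≤ c * ‖Φtilde k‖ + r * εbar := key k
        _ ≤ c * (c ^ k * ‖Φtilde 0‖ + S) + r * εbar := by
            have := mul_le_mul_of_nonneg_left ih h0c
            linarith
        _ = c ^ (k + 1) * ‖Φtilde 0‖ + (c * S + r * εbar) := by ring
        _ = c ^ (k + 1) * ‖Φtilde 0‖ + S := by rw [hfix]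
  refine ⟨h0c, hc1, ?_, ?_⟩
  · -- limsup bound
    have hvt : Filter.Tendsto (fun k => c ^ k * ‖Φtilde 0‖ + S) Filter.atTop (nhds S) := by
      have h0 : Filter.Tendsto (fun k : ℕ => c ^ k) Filter.atTop (nhds 0) :=
        tendsto_pow_atTop_nhds_zero_of_lt_one h0c hc1
      have := (h0.mul_const ‖Φtilde 0‖).add_const S
      simpa using this
    calc Filter.limsup (fun k => ‖Φtilde k‖) Filter.atTop
        ≤ Filter.limsup (fun k => c ^ k * ‖Φtilde 0‖ + S) Filter.atTop := by
          have hco : Filter.IsCoboundedUnder (· ≤ ·) Filter.atTop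
              (fun k => ‖Φtilde k‖) :=
            Filter.IsBoundedUnder.isCoboundedUnder_le
              ⟨0, Filter.eventually_map.2 (Filter.Eventually.of_forall fun k => norm_nonneg _)⟩
          exact Filter.limsup_le_limsup (Filter.Eventually.of_forall bound) hco
            hvt.isBoundedUnder_le
      _ = S := hvt.limsup_eq
  · -- UUB of the identification error
    intro ζ ω ωb hζ hω
    refine ⟨‖Φtilde 0‖ + S + ωb, Filter.Eventually.of_forall fun k => ?_⟩
    have hx : ‖(show EuclideanSpace ℝ (Fin n) from WithLp.toLp 2 (Φtilde k *ᵥ ζ k))‖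
        = Real.sqrt (∑ i, (((Φtilde k *ᵥ fun j => ζ k j)) i) ^ 2) := by
      rw [EuclideanSpace.norm_eq]
      simp only [Real.norm_eq_abs, sq_abs, PiLp.toLp_apply]
    have hz : ‖ζ k‖ = Real.sqrt (∑ j, (ζ k j) ^ 2) := by
      rw [EuclideanSpace.norm_eq]
      simp only [Real.norm_eq_abs, sq_abs]
    have h1 : ‖(show EuclideanSpace ℝ (Fin n) from WithLp.toLp 2 (Φtilde k *ᵥ ζ k))‖ ≤ ‖Φtilde k‖ * ‖ζ k‖ := by
      rw [hx, hz]
      exact mulvec_sq_le (Φtilde k) (fun j => ζ k j)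
    have h2 : ‖Φtilde k‖ * ‖ζ k‖ ≤ ‖Φtilde k‖ :=
      mul_le_of_le_one_right (norm_nonneg _) (hζ k)
    have h3 : ‖Φtilde k‖ ≤ ‖Φtilde 0‖ + S := by
      have := bound k
      have hck : c ^ k ≤ 1 := pow_le_one₀ h0c hc1.le
      nlinarith [norm_nonneg (Φtilde 0)]
    calc ‖(show EuclideanSpace ℝ (Fin n) from WithLp.toLp 2 (Φtilde k *ᵥ ζ k)) - ω k‖
        ≤ ‖(show EuclideanSpace ℝ (Fin n) from WithLp.toLp 2 (Φtilde k *ᵥ ζ k))‖ + ‖ω k‖ := norm_sub_le _ _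
      _ ≤ ‖Φtilde 0‖ + S + ωb := by
          have := hω k
          linarith
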